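/- Let k ∈ ℕ_+ and λ̲ ∈ ℝ_+^k be fully supercritical (λ^{∖i} := Σ_{j≠i} λ_j > 1 for all i∈[k]). Then the vector (p_I)_{I⊆[k]}, where p_∅ = 0 and p_I = P(there exists i∈I such that the root of an edge-colored Poisson branching process tree with color intensity vector λ̲ is i-avoiding connected to infinity), is the unique relevant solution of the system x_∅ = 0, x_I = 1 − exp(−Σ_{j∈I} λ_j x_{I∖{j}} − x_I Σ_{j∈[k]∖I} λ_j) for all nonempty I ⊆ [k]; that is, it is the unique solution satisfying 0 < x_I < 1 for every nonempty I ⊆ [k]. -/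

import Mathlib

open MeasureTheory ProbabilityTheory Filter

namespace CAP

/-- Ulam–Harris labels for the edge-colored branching-process tree: a vertex is a list of
(color, index-among-siblings-of-that-color) pairs, read from the vertex back to the root. -/
abbrev Vtx (k : ℕ) := List (Fin k × ℕ)

/-- Membership in the branching-process tree determined by the offspring configuration `c`,
where `c v i` is the number of children of `v` attached by an edge of color `i`. -/
def inTree {k : ℕ} (c : Vtx k → Fin k → ℕ) : Vtx k → Prop
  | [] => True
  | q :: v => inTree c v ∧ q.2 < c v q.1

/-- `v` is `i`-avoiding connected to infinity: there is an infinite path of descendants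
starting at `v` using no edge of color `i`. -/
def avoidInf {k : ℕ} (c : Vtx k → Fin k → ℕ) (i : Fin k) (v : Vtx k) : Prop :=
  ∃ f : ℕ → Vtx k, f 0 = v ∧ ∀ m : ℕ,
    inTree c (f (m + 1)) ∧ ∃ q : Fin k × ℕ, q.1 ≠ i ∧ f (m + 1) = q :: f m

/-- The root and the vertex `v` are `i`-avoiding friends: either the (unique) path from the
root to `v` uses no edge of color `i`, or both are `i`-avoiding connected to infinity. -/
def iFriend {k : ℕ} (c : Vtx k → Fin k → ℕ) (i : Fin k) (v : Vtx k) : Prop :=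
  (∀ q ∈ v, Prod.fst q ≠ i) ∨ (avoidInf c i ([] : Vtx k) ∧ avoidInf c i v)

/-- The set of (color-avoiding) friends of the root in the branching-process tree. -/
def friendSet {k : ℕ} (c : Vtx k → Fin k → ℕ) : Set (Vtx k) :=
  {v | inTree c v ∧ ∀ i : Fin k, iFriend c i v}

/-- `X v i` (the numbers of color-`i` children of `v`) form an independent family of
Poisson(`lam i`) random variables: the edge-colored Poisson branching process tree. -/
structure IsECBP {k : ℕ} {Ω : Type*} [MeasurableSpace Ω] (μ : Measure Ω)
    (lam : Fin k → ℝ) (X : Vtx k → Fin k → Ω → ℕ) : Prop where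
  isProb : IsProbabilityMeasure μ
  meas : ∀ v i, Measurable (X v i)
  indep : iIndepFun (m := fun _ : Vtx k × Fin k => (inferInstance : MeasurableSpace ℕ))
    (fun p : Vtx k × Fin k => X p.1 p.2) μ
  poisson : ∀ v i m, μ {ω | X v i ω = m}
    = ENNReal.ofReal (Real.exp (-(lam i)) * (lam i) ^ m / m.factorial)

/-- The `i`-avoiding graph of a colored edge configuration `c` on `Fin n`:
`x` and `y` are adjacent if they are joined by an edge of some color `j ≠ i`. -/
def avoidGraph {k n : ℕ} (c : Fin k → Sym2 (Fin n) → Bool) (i : Fin k) :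
    SimpleGraph (Fin n) where
  Adj x y := x ≠ y ∧ ∃ j : Fin k, j ≠ i ∧ c j s(x, y) = true
  symm := ⟨by
    rintro x y ⟨hxy, j, hj, hc⟩
    exact ⟨hxy.symm, j, hj, by rwa [Sym2.eq_swap] at hc⟩⟩
  loopless := ⟨fun x h => h.1 rfl⟩

/-- The color-avoiding connected component of `v`. -/
def caComp {k n : ℕ} (c : Fin k → Sym2 (Fin n) → Bool) (v : Fin n) : Set (Fin n) :=
  {w | ∀ i : Fin k, (avoidGraph c i).Reachable v w}

/-- The edge-colored Erdős–Rényi multigraph `𝒢_n(V, λ)` on vertex set `Fin n`: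
independent colored edge indicators, an edge of color `i` being present with probability
`1 - exp (- lam i / n)`. -/
structure IsECER {k : ℕ} {Ω : Type*} [MeasurableSpace Ω] (μ : Measure Ω) (n : ℕ)
    (lam : Fin k → ℝ) (E : Fin k → Sym2 (Fin n) → Ω → Bool) : Prop where
  isProb : IsProbabilityMeasure μ
  meas : ∀ i e, Measurable (E i e)
  indep : iIndepFun (m := fun _ : Fin k × Sym2 (Fin n) => (inferInstance : MeasurableSpace Bool))
    (fun p : Fin k × Sym2 (Fin n) => E p.1 p.2) μ
  prob : ∀ i e, ¬ e.IsDiag →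
    μ {ω | E i e ω = true} = ENNReal.ofReal (1 - Real.exp (-(lam i) / n))
  noDiag : ∀ i e, e.IsDiag → ∀ ω, E i e ω = false


/-- A solution of the system of equations
`x_∅ = 0`, `x_I = 1 − exp(−Σ_{j∈I} λ_j x_{I∖{j}} − x_I·Σ_{j∉I} λ_j)` (for nonempty `I`),
which moreover satisfies `0 < x_I < 1` for every nonempty `I ⊆ [k]`. -/
def IsRelevantSolution {k : ℕ} (lam : Fin k → ℝ) (x : Finset (Fin k) → ℝ) : Prop :=
  x ∅ = 0 ∧
  (∀ I : Finset (Fin k), I.Nonempty →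
    x I = 1 - Real.exp (-(∑ j ∈ I, lam j * x (I.erase j)) - x I * ∑ j ∈ Iᶜ, lam j)) ∧
  (∀ I : Finset (Fin k), I.Nonempty → 0 < x I ∧ x I < 1)


open Topology

set_option maxHeartbeats 1000000

/-- Finite-depth `i`-avoiding reachability (length-`n` avoiding path below `v`). -/
def reach {k : ℕ} (c : Vtx k → Fin k → ℕ) (i : Fin k) : ℕ → Vtx k → Prop
  | 0, _ => True
  | n+1, v => ∃ q : Fin k × ℕ, q.1 ≠ i ∧ q.2 < c v q.1 ∧ reach c i n (q :: v)

variable {k : ℕ} {c : Vtx k → Fin k → ℕ} {i : Fin k}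

lemma reach_succ_imp : ∀ {n : ℕ} {v : Vtx k}, reach c i (n+1) v → reach c i n v := by
  intro n
  induction n with
  | zero => intro v _; trivial
  | succ n ih =>
    rintro v ⟨q, h1, h2, h3⟩
    exact ⟨q, h1, h2, ih h3⟩

lemma reach_mono {m n : ℕ} (h : m ≤ n) {v : Vtx k} (hr : reach c i n v) : reach c i m v := by
  induction h with
  | refl => exact hr
  | step h ih => exact ih (reach_succ_imp hr)

lemma avoidInf_root_iff : avoidInf c i ([] : Vtx k) ↔ ∀ n, reach c i n ([] : Vtx k) := by
  constructor
  · rintro ⟨f, hf0, hf⟩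
    have key : ∀ n m, reach c i n (f m) := by
      intro n
      induction n with
      | zero => intro m; trivial
      | succ n ih =>
        intro m
        obtain ⟨hin, q, hqi, hq⟩ := hf m
        rw [hq] at hin
        exact ⟨q, hqi, hin.2, by rw [← hq]; exact ih (m+1)⟩
    intro n; have := key n 0; rwa [hf0] at this
  · intro h
    have step : ∀ v : Vtx k, inTree c v → (∀ n, reach c i n v) →
        ∃ q : Fin k × ℕ, q.1 ≠ i ∧ inTree c (q :: v) ∧ ∀ n, reach c i n (q :: v) := by
      intro v hv hr
      by_contra hcon
      push_neg at hcon
      have hfail : ∀ q : Fin k × ℕ, q.1 ≠ i → q.2 < c v q.1 → ∃ n, ¬ reach c i n (q :: v) :=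
        fun q h1 h2 => hcon q h1 ⟨hv, h2⟩
      classical
      -- the set of admissible children is finite
      have hfin : ({q : Fin k × ℕ | q.1 ≠ i ∧ q.2 < c v q.1}).Finite := by
        refine Set.Finite.subset (Set.Finite.biUnion (Set.finite_univ (α := Fin k))
          (fun j _ => (Set.finite_Iio (c v j)).image (fun m => (j, m)))) ?_
        rintro ⟨j, m⟩ ⟨-, hm⟩
        exact Set.mem_biUnion (Set.mem_univ j) ⟨m, hm, rfl⟩
      set g : Fin k × ℕ → ℕ := fun q =>
        if h : q.1 ≠ i ∧ q.2 < c v q.1 then (hfail q h.1 h.2).choose else 0 with hg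
      set N : ℕ := hfin.toFinset.sup g with hN
      obtain ⟨q, hqi, hqlt, hqr⟩ := hr (N + 1)
      have hqmem : q ∈ hfin.toFinset := hfin.mem_toFinset.2 ⟨hqi, hqlt⟩
      have hgN : g q ≤ N := Finset.le_sup hqmem
      have : ¬ reach c i (g q) (q :: v) := by
        rw [hg]; simp only [dif_pos (And.intro hqi hqlt)]
        exact (hfail q hqi hqlt).choose_spec
      exact this (reach_mono hgN hqr)
    -- build the infinite path by recursion
    classical
    let T : Type _ := {v : Vtx k // inTree c v ∧ ∀ n, reach c i n v}
    let gnext : T → T := fun p =>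
      ⟨(step p.1 p.2.1 p.2.2).choose :: p.1,
        (step p.1 p.2.1 p.2.2).choose_spec.2.1, (step p.1 p.2.1 p.2.2).choose_spec.2.2⟩
    let s : ℕ → T := fun n => gnext^[n] ⟨([] : Vtx k), trivial, h⟩
    refine ⟨fun m => (s m).1, rfl, fun m => ?_⟩
    have hs : s (m + 1) = gnext (s m) := Function.iterate_succ_apply' _ _ _
    constructor
    · show inTree c (s (m+1)).1
      rw [hs]; exact (gnext (s m)).2.1
    · refine ⟨(step (s m).1 (s m).2.1 (s m).2.2).choose,
        (step (s m).1 (s m).2.1 (s m).2.2).choose_spec.1, ?_⟩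
      show (s (m+1)).1 = _
      rw [hs]


section Measure

variable {Ω' : Type*} [MeasurableSpace Ω'] {μ' : Measure Ω'} (X : Vtx k → Fin k → Ω' → ℕ)
set_option linter.unusedSectionVars false
set_option linter.unusedVariables false

/-- σ-algebra generated by the single offspring variable indexed by `p`. -/
def coordMS (p : Vtx k × Fin k) : MeasurableSpace Ω' :=
  MeasurableSpace.comap (X p.1 p.2) inferInstance

/-- σ-algebra generated by a set of offspring variables. -/
def blockMS (S : Set (Vtx k × Fin k)) : MeasurableSpace Ω' := ⨆ p ∈ S, coordMS X p

lemma blockMS_mono {S T : Set (Vtx k × Fin k)} (h : S ⊆ T) : blockMS X S ≤ blockMS X T :=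
  biSup_mono h

lemma coordMS_le_blockMS {S : Set (Vtx k × Fin k)} {p : Vtx k × Fin k} (hp : p ∈ S) :
    coordMS X p ≤ blockMS X S :=
  le_biSup _ hp

lemma blockMS_le (hm : ∀ v j, Measurable (X v j)) (S : Set (Vtx k × Fin k)) :
    blockMS X S ≤ ‹MeasurableSpace Ω'› :=
  iSup₂_le fun p _ => (hm p.1 p.2).comap_le

/-- The coordinates relevant to the subtree rooted at `v`. -/
def subCoords (v : Vtx k) : Set (Vtx k × Fin k) := {p | v <:+ p.1}

lemma subCoords_cons {q : Fin k × ℕ} {v : Vtx k} : subCoords (k := k) (q :: v) ⊆ subCoords v :=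
  fun p hp => (List.suffix_cons q v).trans hp

lemma measurableSet_count {v : Vtx k} {j : Fin k} {s : Set ℕ} (hs : MeasurableSet s) :
    MeasurableSet[coordMS X (v, j)] {ω | X v j ω ∈ s} :=
  ⟨s, hs, rfl⟩

/-- The event that there is a length-`n` avoiding path below `v`. -/
def reachSet (i : Fin k) (n : ℕ) (v : Vtx k) : Set Ω' :=
  {ω | reach (fun u j => X u j ω) i n v}

lemma measurableSet_reachSet (i : Fin k) :
    ∀ (n : ℕ) (v : Vtx k), MeasurableSet[blockMS X (subCoords v)] (reachSet X i n v) := by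
  intro n
  induction n with
  | zero =>
    intro v
    have : reachSet X i 0 v = Set.univ := by ext ω; simp [reachSet, reach]
    rw [this]; exact MeasurableSet.univ
  | succ n ih =>
    intro v
    have : reachSet X i (n+1) v = ⋃ (q : Fin k × ℕ) (_ : q.1 ≠ i),
        ({ω | q.2 < X v q.1 ω} ∩ reachSet X i n (q :: v)) := by
      ext ω
      simp only [reachSet, reach, Set.mem_setOf_eq, Set.mem_iUnion, Set.mem_inter_iff]
      tauto
    rw [this]
    refine MeasurableSet.iUnion fun q => MeasurableSet.iUnion fun hq =>
      MeasurableSet.inter ?_ ?_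
    · exact coordMS_le_blockMS X (List.suffix_refl v) _
        (measurableSet_count X (s := Set.Ioi q.2) measurableSet_Ioi)
    · exact blockMS_mono X subCoords_cons _ (ih (q :: v))

/-- The event that no color of `I` admits a length-`n` avoiding path below `v`. -/
def Fev (I : Finset (Fin k)) (n : ℕ) (v : Vtx k) : Set Ω' :=
  ⋂ i ∈ I, (reachSet X i n v)ᶜ

lemma measurableSet_Fev {I : Finset (Fin k)} {n : ℕ} {v : Vtx k} :
    MeasurableSet[blockMS X (subCoords v)] (Fev X I n v) :=
  MeasurableSet.biInter I.countable_toSet fun i _ => (measurableSet_reachSet X i n v).compl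

/-- Product rule for events measurable with respect to disjoint blocks of coordinates. -/
lemma blockProd (hprob : IsProbabilityMeasure μ')
    (hind : iIndep (coordMS X) μ') (hm : ∀ v j, Measurable (X v j))
    {β : Type*} (T : β → Set (Vtx k × Fin k)) (A : β → Set Ω')
    (hT : Pairwise (Function.onFun Disjoint T))
    (hA : ∀ b, MeasurableSet[blockMS X (T b)] (A b)) (s : Finset β) :
    μ' (⋂ b ∈ s, A b) = ∏ b ∈ s, μ' (A b) := by
  classical
  induction s using Finset.induction with
  | empty => simp
  | @insert a s ha ih =>
    rw [Finset.set_biInter_insert, Finset.prod_insert ha, ← ih]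
    have hdisj : Disjoint (T a) (⋃ b ∈ s, T b) := by
      refine Set.disjoint_left.2 fun p hpa hpb => ?_
      obtain ⟨b, hb, hpb⟩ := Set.mem_iUnion₂.1 hpb
      exact Set.disjoint_left.1 (hT (fun h : a = b => ha (h ▸ hb))) hpa hpb
    have hindep : Indep (blockMS X (T a)) (blockMS X (⋃ b ∈ s, T b)) μ' := by
      have := indep_iSup_of_disjoint (m := coordMS X)
        (fun p => (hm p.1 p.2).comap_le) hind hdisj
      exact this
    have h2 : MeasurableSet[blockMS X (⋃ b ∈ s, T b)] (⋂ b ∈ s, A b) :=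
      MeasurableSet.biInter s.countable_toSet fun b hb =>
        blockMS_mono X (Set.subset_biUnion_of_mem hb) _ (hA b)
    exact (Indep_iff _ _ _).1 hindep _ _ (hA a) h2

lemma suffix_eq_of_length {α : Type*} {l₁ l₂ u : List α} (h₁ : l₁ <:+ u) (h₂ : l₂ <:+ u)
    (h : l₁.length = l₂.length) : l₁ = l₂ := by
  obtain ⟨t₁, rfl⟩ := h₁
  obtain ⟨t₂, ht⟩ := h₂
  have hlen : t₂.length = t₁.length := by
    have := congrArg List.length ht
    simp only [List.length_append] at this
    omega
  exact (List.append_inj_right ht hlen).symm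

/-- The coordinates relevant to color-`j` children of `v` and their subtrees. -/
def childBlock (v : Vtx k) (j : Fin k) : Set (Vtx k × Fin k) :=
  {p | p = (v, j) ∨ ∃ m : ℕ, ((j, m) :: v) <:+ p.1}

lemma childBlock_disjoint {v : Vtx k} :
    Pairwise (Function.onFun Disjoint (childBlock (k := k) v)) := by
  intro j j' hjj'
  refine Set.disjoint_left.2 ?_
  rintro p (rfl | ⟨m, hm⟩) hp'
  · rcases hp' with h | ⟨m', hm'⟩
    · exact hjj' (congrArg Prod.snd h)
    · have := hm'.length_le; simp at this
  · rcases hp' with rfl | ⟨m', hm'⟩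
    · have := hm.length_le; simp at this
    · have heq := suffix_eq_of_length hm hm' (by simp)
      obtain ⟨h1, -⟩ := List.cons_eq_cons.1 heq
      exact hjj' (congrArg Prod.fst h1)

/-- The iterated generating-function sequence. -/
noncomputable def qseq (lam : Fin k → ℝ) : ℕ → Finset (Fin k) → ENNReal
  | 0, I => if I = ∅ then 1 else 0
  | n+1, I => ∏ j : Fin k, ∑' m : ℕ,
      ENNReal.ofReal (Real.exp (-lam j) * lam j ^ m / m.factorial) * (qseq lam n (I.erase j)) ^ m

lemma mem_Fev {I : Finset (Fin k)} {n : ℕ} {v : Vtx k} {ω : Ω'} :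
    ω ∈ Fev X I n v ↔ ∀ i ∈ I, ¬ reach (fun u j => X u j ω) i n v := by
  simp [Fev, reachSet]

/-- Blocks for the split of color-`j` children of `v`. -/
def optBlock (v : Vtx k) (j : Fin k) : Option ℕ → Set (Vtx k × Fin k)
  | none => {(v, j)}
  | some m' => subCoords ((j, m') :: v)

/-- Events for the split of color-`j` children of `v`. -/
def optEv (I : Finset (Fin k)) (n : ℕ) (v : Vtx k) (j : Fin k) (m : ℕ) : Option ℕ → Set Ω'
  | none => {ω | X v j ω = m}
  | some m' => Fev X (I.erase j) n ((j, m') :: v)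

lemma measure_Fev {lam : Fin k → ℝ} (hX : IsECBP μ' lam X) :
    ∀ (n : ℕ) (v : Vtx k) (I : Finset (Fin k)), μ' (Fev X I n v) = qseq lam n I := by
  classical
  have hprob := hX.isProb
  intro n
  induction n with
  | zero =>
    intro v I
    rcases eq_or_ne I ∅ with rfl | hI
    · have : Fev X (∅ : Finset (Fin k)) 0 v = Set.univ := by simp [Fev]
      rw [this, measure_univ]; simp [qseq]
    · obtain ⟨i, hi⟩ := Finset.nonempty_iff_ne_empty.2 hI
      have : Fev X I 0 v = ∅ := by
        refine Set.eq_empty_iff_forall_notMem.2 fun ω hω => ?_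
        exact (mem_Fev X).1 hω i hi trivial
      rw [this, measure_empty, qseq, if_neg hI]
  | succ n ih =>
    intro v I
    set term : Fin k → ℕ → Set Ω' := fun j m =>
      ({ω | X v j ω = m} ∩ ⋂ m' ∈ Finset.range m, Fev X (I.erase j) n ((j, m') :: v))
      with hterm_def
    set G : Fin k → Set Ω' := fun j => ⋃ m : ℕ, term j m with hG
    have hterm_meas : ∀ j m, MeasurableSet[blockMS X (childBlock v j)] (term j m) := by
      intro j m
      refine MeasurableSet.inter ?_ ?_
      · exact coordMS_le_blockMS X (Or.inl rfl) _
          (measurableSet_count X (s := {m}) (measurableSet_singleton m))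
      · exact MeasurableSet.biInter (Finset.range m).countable_toSet fun m' _ =>
          blockMS_mono X (fun p hp => Or.inr ⟨m', hp⟩) _ (measurableSet_Fev X)
    have hGmeas : ∀ j, MeasurableSet[blockMS X (childBlock v j)] (G j) :=
      fun j => MeasurableSet.iUnion fun m => hterm_meas j m
    -- decomposition of the event according to the first generation below `v`
    have hdecomp : Fev X I (n+1) v = ⋂ j : Fin k, G j := by
      ext ω
      simp only [Set.mem_iInter, hG, Set.mem_iUnion, hterm_def, Set.mem_inter_iff,
        Set.mem_setOf_eq]
      constructor
      · intro hω j
        refine ⟨X v j ω, rfl, ?_⟩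
        refine fun m' hm' => (mem_Fev X).2 fun i hi hr => ?_
        have hiI : i ∈ I := Finset.mem_of_mem_erase hi
        have hij : i ≠ j := Finset.ne_of_mem_erase hi
        exact (mem_Fev X).1 hω i hiI
          ⟨(j, m'), fun h => hij h.symm, Finset.mem_range.1 hm', hr⟩
      · intro hω
        refine (mem_Fev X).2 fun i hi hr => ?_
        obtain ⟨q, hqi, hqlt, hqr⟩ := hr
        obtain ⟨m, hm, hsub⟩ := hω q.1
        have hq2 : q.2 ∈ Finset.range m := Finset.mem_range.2 (by rw [← hm]; exact hqlt)
        have hmem := hsub q.2 hq2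
        have hierase : i ∈ I.erase q.1 := Finset.mem_erase.2 ⟨fun h => hqi (h ▸ rfl), hi⟩
        exact (mem_Fev X).1 hmem i hierase hqr
    -- product over colors
    have h1 : μ' (Fev X I (n+1) v) = ∏ j : Fin k, μ' (G j) := by
      rw [hdecomp]
      have := blockProd X hprob hX.indep hX.meas (childBlock v) G
        childBlock_disjoint hGmeas Finset.univ
      simpa using this
    -- measure of a single term
    have hterm_val : ∀ j m, μ' (term j m) =
        ENNReal.ofReal (Real.exp (-lam j) * lam j ^ m / m.factorial) *
          (qseq lam n (I.erase j)) ^ m := by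
      intro j m
      set T : Option ℕ → Set (Vtx k × Fin k) := optBlock v j with hT_def
      set A : Option ℕ → Set Ω' := optEv X I n v j m with hA_def
      have hT : Pairwise (Function.onFun Disjoint T) := by
        rintro (_ | m₁) (_ | m₂) hoo' <;>
          refine Set.disjoint_left.2 fun p hp hp' => ?_ <;>
          simp only [hT_def, optBlock, Set.mem_singleton_iff, subCoords, Set.mem_setOf_eq]
            at hp hp'
        · exact hoo' rfl
        · have hlen := hp'.length_le
          rw [hp] at hlen
          simp at hlen
        · have hlen := hp.length_le
          rw [hp'] at hlen
          simp at hlen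
        · have heq := suffix_eq_of_length hp hp' (by simp)
          obtain ⟨h1, -⟩ := List.cons_eq_cons.1 heq
          exact hoo' (by rw [show m₁ = m₂ from congrArg Prod.snd h1])
      have hA : ∀ o, MeasurableSet[blockMS X (T o)] (A o) := by
        rintro (_ | m') <;> simp only [hT_def, hA_def, optBlock, optEv]
        · exact coordMS_le_blockMS X (Set.mem_singleton ((v, j) : Vtx k × Fin k)) _
            (measurableSet_count X (s := {m}) (measurableSet_singleton m))
        · exact measurableSet_Fev X
      have hnone : (none : Option ℕ) ∉ (Finset.range m).image Option.some := by simp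
      have hkey := blockProd X hprob hX.indep hX.meas T A hT hA
        (insert none ((Finset.range m).image Option.some))
      have himage : (⋂ b ∈ (Finset.range m).image Option.some, A b)
          = ⋂ m' ∈ Finset.range m, Fev X (I.erase j) n ((j, m') :: v) := by
        ext ω
        constructor
        · intro hω
          exact Set.mem_iInter₂.2 fun m' hm' =>
            Set.mem_iInter₂.1 hω (some m') (Finset.mem_image.2 ⟨m', hm', rfl⟩)
        · intro hω
          refine Set.mem_iInter₂.2 ?_
          rintro b hb
          obtain ⟨m', hm', rfl⟩ := Finset.mem_image.1 hb
          exact Set.mem_iInter₂.1 hω m' hm'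
      have hAnone : A none = {ω | X v j ω = m} := by simp only [hA_def, optEv]
      have hsetEq : (⋂ b ∈ insert none ((Finset.range m).image Option.some), A b) = term j m := by
        rw [Finset.set_biInter_insert, himage, hAnone, hterm_def]
      have hprodEq : (∏ b ∈ insert none ((Finset.range m).image Option.some), μ' (A b))
          = μ' {ω | X v j ω = m} * (qseq lam n (I.erase j)) ^ m := by
        rw [Finset.prod_insert hnone,
          Finset.prod_image (fun x _ y _ h => Option.some.inj h), hAnone]
        congr 1
        have : ∀ m' ∈ Finset.range m, μ' (A (some m')) = qseq lam n (I.erase j) := by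
          intro m' _
          simp only [hA_def, optEv]
          exact ih ((j, m') :: v) (I.erase j)
        rw [Finset.prod_congr rfl this, Finset.prod_const, Finset.card_range]
      calc μ' (term j m) = ∏ b ∈ insert none ((Finset.range m).image Option.some), μ' (A b) := by
            rw [← hsetEq, hkey]
        _ = μ' {ω | X v j ω = m} * (qseq lam n (I.erase j)) ^ m := hprodEq
        _ = ENNReal.ofReal (Real.exp (-lam j) * lam j ^ m / m.factorial) *
              (qseq lam n (I.erase j)) ^ m := by rw [hX.poisson v j m]
    -- disjointness of the terms, measure of G j
    have hGdis : ∀ j, Pairwise (Function.onFun Disjoint (term j)) := by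
      intro j m m' hmm'
      exact Set.disjoint_left.2 fun ω hω hω' => hmm' (hω.1.symm.trans hω'.1)
    have hGval : ∀ j, μ' (G j) = ∑' m : ℕ,
        ENNReal.ofReal (Real.exp (-lam j) * lam j ^ m / m.factorial) *
          (qseq lam n (I.erase j)) ^ m := by
      intro j
      rw [hG]
      rw [measure_iUnion (hGdis j)
        (fun m => blockMS_le X hX.meas _ _ (hterm_meas j m))]
      exact tsum_congr fun m => hterm_val j m
    rw [h1]
    simp only [qseq]
    exact Finset.prod_congr rfl fun j _ => hGval j

lemma Fev_mono {I : Finset (Fin k)} {v : Vtx k} : Monotone (fun n => Fev X I n v) := by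
  intro a b hab ω hω
  exact (mem_Fev X).2 fun i hi hr => (mem_Fev X).1 hω i hi (reach_mono hab hr)

lemma iUnion_Fev (I : Finset (Fin k)) :
    (⋃ n, Fev X I n ([] : Vtx k)) =
      {ω | ∃ i ∈ I, avoidInf (fun v j => X v j ω) i ([] : Vtx k)}ᶜ := by
  classical
  ext ω
  simp only [Set.mem_iUnion, Set.mem_compl_iff, Set.mem_setOf_eq, not_exists]
  constructor
  · rintro ⟨n, hn⟩ i ⟨hi, hav⟩
    exact (mem_Fev X).1 hn i hi (avoidInf_root_iff.1 hav n)
  · intro h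
    have h' : ∀ i ∈ I, ∃ n, ¬ reach (fun u j => X u j ω) i n ([] : Vtx k) := by
      intro i hi
      by_contra hcon; push_neg at hcon
      exact h i ⟨hi, avoidInf_root_iff.2 hcon⟩
    set g : Fin k → ℕ := fun i => if hi : i ∈ I then (h' i hi).choose else 0 with hg
    refine ⟨I.sup g, (mem_Fev X).2 fun i hi hr => ?_⟩
    have hni : ¬ reach (fun u j => X u j ω) i (g i) ([] : Vtx k) := by
      rw [hg]; simp only [dif_pos hi]; exact (h' i hi).choose_spec
    exact hni (reach_mono (Finset.le_sup hi) hr)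

lemma tsum_poisson_pgf {l : ℝ} (hl : 0 ≤ l) {x : ENNReal} (hx : x ≤ 1) :
    (∑' m : ℕ, ENNReal.ofReal (Real.exp (-l) * l ^ m / m.factorial) * x ^ m)
      = ENNReal.ofReal (Real.exp (-(l * (1 - x.toReal)))) := by
  have hxt : x ≠ ⊤ := (hx.trans_lt ENNReal.one_lt_top).ne
  have hx0 : (0:ℝ) ≤ x.toReal := ENNReal.toReal_nonneg
  have hrw : ∀ m : ℕ, ENNReal.ofReal (Real.exp (-l) * l ^ m / m.factorial) * x ^ m
      = ENNReal.ofReal (Real.exp (-l) * (l * x.toReal) ^ m / m.factorial) := by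
    intro m
    conv_lhs => rw [← ENNReal.ofReal_toReal hxt]
    rw [← ENNReal.ofReal_pow hx0, ← ENNReal.ofReal_mul (by positivity)]
    congr 1
    rw [mul_pow]
    ring
  rw [tsum_congr hrw]
  have hsummable : Summable (fun m : ℕ => Real.exp (-l) * (l * x.toReal) ^ m / m.factorial) := by
    simpa [mul_div_assoc] using
      (Real.summable_pow_div_factorial (l * x.toReal)).mul_left (Real.exp (-l))
  rw [← ENNReal.ofReal_tsum_of_nonneg (fun m => by positivity) hsummable]
  congr 1
  have hexp : ∑' m : ℕ, (l * x.toReal) ^ m / m.factorial = Real.exp (l * x.toReal) := by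
    rw [Real.exp_eq_exp_ℝ, NormedSpace.exp_eq_tsum_div]
  calc ∑' m : ℕ, Real.exp (-l) * (l * x.toReal) ^ m / m.factorial
      = Real.exp (-l) * ∑' m : ℕ, (l * x.toReal) ^ m / m.factorial := by
        rw [← tsum_mul_left]; exact tsum_congr fun m => by ring
    _ = Real.exp (-l) * Real.exp (l * x.toReal) := by rw [hexp]
    _ = Real.exp (-(l * (1 - x.toReal))) := by rw [← Real.exp_add]; ring_nf

lemma root_unique {C D a b : ℝ} (hC : 0 ≤ C) (hD : 0 < D) (ha : 0 < a) (hab : a < b)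
    (hA : a = 1 - Real.exp (-C - a * D)) (hB : b = 1 - Real.exp (-C - b * D)) : False := by
  have hb : 0 < b := ha.trans hab
  set θ : ℝ := a / b with hθdef
  have hθpos : 0 < θ := div_pos ha hb
  have hθlt : θ < 1 := (div_lt_one hb).2 hab
  have hsum : (1 - θ) + θ = 1 := by ring
  have hne : (-C : ℝ) ≠ -C - b * D := by
    have : 0 < b * D := mul_pos hb hD
    intro h; linarith [h]
  have key := strictConvexOn_exp.2 (Set.mem_univ (-C)) (Set.mem_univ (-C - b * D)) hne
    (by linarith : (0:ℝ) < 1 - θ) hθpos hsum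
  have hcomb : (1 - θ) • (-C) + θ • (-C - b * D) = -C - a * D := by
    have hθb : θ * b = a := div_mul_cancel₀ a hb.ne'
    simp only [smul_eq_mul]
    nlinarith [hθb]
  rw [hcomb] at key
  have hexpC : Real.exp (-C) ≤ 1 := Real.exp_le_one_iff.2 (by linarith)
  have h1 : Real.exp (-C - a * D) = 1 - a := by linarith [hA]
  have h2 : Real.exp (-C - b * D) = 1 - b := by linarith [hB]
  rw [h1, h2, smul_eq_mul, smul_eq_mul] at key
  have hθb : θ * b = a := div_mul_cancel₀ a hb.ne'
  nlinarith [key, hθb, mul_le_mul_of_nonneg_left hexpC (by linarith : (0:ℝ) ≤ 1 - θ)]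

end Measure

/-- If `λ` is fully supercritical, then the probability vector
`(p_I)_{I ⊆ [k]}`, `p_I := P(∃ i ∈ I, the root of the edge-colored Poisson branching process
tree is i-avoiding connected to infinity)`, is the unique relevant solution of the system. -/
theorem pI_unique_relevantSolution
    {k : ℕ} (hk : 1 ≤ k) (lam : Fin k → ℝ) (hpos : ∀ i, 0 < lam i)
    (hsup : ∀ i : Fin k, 1 < ∑ j ∈ Finset.univ.erase i, lam j)
    {Ω' : Type*} [MeasurableSpace Ω'] (μ' : Measure Ω')
    (X : Vtx k → Fin k → Ω' → ℕ) (hX : IsECBP μ' lam X)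
    (p : Finset (Fin k) → ℝ)
    (hp : ∀ I : Finset (Fin k),
      p I = (μ' {ω' : Ω' |
        ∃ i ∈ I, avoidInf (fun v j => X v j ω') i ([] : Vtx k)}).toReal) :
    IsRelevantSolution lam p ∧
      ∀ x : Finset (Fin k) → ℝ, IsRelevantSolution lam x → x = p := by
  classical
  have hprob := hX.isProb
  have hFevMeas : ∀ (I : Finset (Fin k)) (n : ℕ), MeasurableSet (Fev X I n ([] : Vtx k)) :=
    fun I n => blockMS_le X hX.meas _ _ (measurableSet_Fev X)
  set U : Finset (Fin k) → Set Ω' := fun I => ⋃ n, Fev X I n ([] : Vtx k) with hU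
  have hUmeas : ∀ I, MeasurableSet (U I) := fun I => MeasurableSet.iUnion fun n => hFevMeas I n
  have hUne : ∀ I, μ' (U I) ≠ ⊤ := fun I => measure_ne_top μ' _
  set u : Finset (Fin k) → ℝ := fun I => (μ' (U I)).toReal with hu
  have hq_le_one : ∀ (n : ℕ) (I : Finset (Fin k)), qseq lam n I ≤ 1 := by
    intro n I
    rw [← measure_Fev X hX n ([] : Vtx k) I]
    exact prob_le_one
  have htendsto : ∀ I, Tendsto (fun n => (qseq lam n I).toReal) atTop (𝓝 (u I)) := by
    intro I
    have h1 : Tendsto (fun n => μ' (Fev X I n ([] : Vtx k))) atTop (𝓝 (μ' (U I))) :=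
      tendsto_measure_iUnion_atTop (Fev_mono X)
    have h2 := (ENNReal.tendsto_toReal (hUne I)).comp h1
    exact h2.congr fun n => by rw [Function.comp_apply, measure_Fev X hX n ([] : Vtx k) I]
  have hrec : ∀ (n : ℕ) (I : Finset (Fin k)), (qseq lam (n+1) I).toReal
      = ∏ j : Fin k, Real.exp (-(lam j * (1 - (qseq lam n (I.erase j)).toReal))) := by
    intro n I
    have hq : qseq lam (n+1) I = ∏ j : Fin k,
        ENNReal.ofReal (Real.exp (-(lam j * (1 - (qseq lam n (I.erase j)).toReal)))) := by
      simp only [qseq]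
      exact Finset.prod_congr rfl fun j _ => tsum_poisson_pgf (le_of_lt (hpos j)) (hq_le_one n _)
    rw [hq, ENNReal.toReal_prod]
    exact Finset.prod_congr rfl fun j _ => ENNReal.toReal_ofReal (Real.exp_nonneg _)
  have hueq : ∀ I, u I = ∏ j : Fin k, Real.exp (-(lam j * (1 - u (I.erase j)))) := by
    intro I
    have hL : Tendsto (fun n => (qseq lam (n+1) I).toReal) atTop (𝓝 (u I)) :=
      (htendsto I).comp (tendsto_add_atTop_nat 1)
    have hR : Tendsto (fun n => ∏ j : Fin k,
        Real.exp (-(lam j * (1 - (qseq lam n (I.erase j)).toReal)))) atTop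
        (𝓝 (∏ j : Fin k, Real.exp (-(lam j * (1 - u (I.erase j)))))) := by
      refine tendsto_finset_prod _ fun j _ => ?_
      have hcont : Continuous fun t : ℝ => Real.exp (-(lam j * (1 - t))) := by fun_prop
      exact (hcont.tendsto _).comp (htendsto (I.erase j))
    exact tendsto_nhds_unique (hL.congr fun n => hrec n I) hR
  have hu_pos : ∀ I, 0 < u I := fun I => by
    rw [hueq I]; positivity
  have hu_empty : u ∅ = 1 := by
    have hF : Fev X (∅ : Finset (Fin k)) 0 ([] : Vtx k) = Set.univ := by simp [Fev]
    have hUuniv : U ∅ = Set.univ :=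
      Set.eq_univ_of_univ_subset (hF ▸ Set.subset_iUnion (fun n => Fev X ∅ n ([] : Vtx k)) 0)
    rw [hu]
    simp only [hUuniv, measure_univ, ENNReal.toReal_one]
  have hpu : ∀ I, p I = 1 - u I := by
    intro I
    rw [hp I]
    have hcompl : {ω' | ∃ i ∈ I, avoidInf (fun v j => X v j ω') i ([] : Vtx k)} = (U I)ᶜ := by
      simp only [hU]
      rw [iUnion_Fev X I, compl_compl]
    rw [hcompl, measure_compl (hUmeas I) (hUne I), measure_univ,
      ENNReal.toReal_sub_of_le prob_le_one (by simp)]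
    simp [hu]
  have hu_le_one : ∀ I, u I ≤ 1 := by
    intro I
    have := hpu I
    have hpnn : 0 ≤ p I := by rw [hp I]; exact ENNReal.toReal_nonneg
    linarith
  -- the equation for `p`
  have hueq' : ∀ I : Finset (Fin k),
      p I = 1 - Real.exp (-(∑ j ∈ I, lam j * p (I.erase j)) - p I * ∑ j ∈ Iᶜ, lam j) := by
    intro I
    have hsplit : ∑ j : Fin k, lam j * (1 - u (I.erase j))
        = (∑ j ∈ I, lam j * p (I.erase j)) + p I * ∑ j ∈ Iᶜ, lam j := by
      rw [← Finset.sum_add_sum_compl I (fun j => lam j * (1 - u (I.erase j)))]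
      congr 1
      · exact Finset.sum_congr rfl fun j hj => by rw [← hpu]
      · rw [Finset.mul_sum]
        refine Finset.sum_congr rfl fun j hj => ?_
        rw [Finset.erase_eq_of_notMem (Finset.mem_compl.1 hj), ← hpu]
        ring
    have hexp : ∏ j : Fin k, Real.exp (-(lam j * (1 - u (I.erase j))))
        = Real.exp (-(∑ j ∈ I, lam j * p (I.erase j)) - p I * ∑ j ∈ Iᶜ, lam j) := by
      rw [← Real.exp_sum]
      congr 1
      rw [Finset.sum_neg_distrib, hsplit]
      ring
    have hfix : u I = Real.exp (-(∑ j ∈ I, lam j * p (I.erase j)) - p I * ∑ j ∈ Iᶜ, lam j) := by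
      rw [hueq I, hexp]
    linarith [hpu I, hfix]
  -- positivity of `p` on nonempty sets
  have hbound : ∀ I : Finset (Fin k), I.Nonempty → 0 < p I ∧ p I < 1 := by
    intro I hI
    constructor
    · obtain ⟨i, hi⟩ := hI
      set Λ : ℝ := ∑ j ∈ Finset.univ.erase i, lam j with hΛ
      have hΛ1 : 1 < Λ := hsup i
      have hΛ0 : 0 < Λ := by linarith
      have hqempty : ∀ n : ℕ, (qseq lam n (∅ : Finset (Fin k))).toReal = 1 := by
        intro n
        have hF : Fev X (∅ : Finset (Fin k)) n ([] : Vtx k) = Set.univ := by simp [Fev]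
        rw [← measure_Fev X hX n ([] : Vtx k) ∅, hF, measure_univ, ENNReal.toReal_one]
      have hsingle : ∀ n : ℕ, (qseq lam (n+1) ({i} : Finset (Fin k))).toReal
          = Real.exp (-(Λ * (1 - (qseq lam n ({i} : Finset (Fin k))).toReal))) := by
        intro n
        rw [hrec n {i}]
        rw [← Finset.mul_prod_erase Finset.univ _ (Finset.mem_univ i)]
        have h1 : ({i} : Finset (Fin k)).erase i = ∅ := by simp
        have hfirst : Real.exp (-(lam i * (1 -
            (qseq lam n (({i} : Finset (Fin k)).erase i)).toReal))) = 1 := by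
          rw [h1, hqempty n]
          simp
        rw [hfirst, one_mul]
        have hprod : ∏ j ∈ Finset.univ.erase i,
            Real.exp (-(lam j * (1 - (qseq lam n (({i} : Finset (Fin k)).erase j)).toReal)))
            = ∏ j ∈ Finset.univ.erase i,
              Real.exp (-(lam j * (1 - (qseq lam n ({i} : Finset (Fin k))).toReal))) := by
          refine Finset.prod_congr rfl fun j hj => ?_
          have hji : j ≠ i := Finset.ne_of_mem_erase hj
          rw [Finset.erase_eq_of_notMem (by simp [hji])]
        rw [hprod, ← Real.exp_sum]
        congr 1
        rw [Finset.sum_neg_distrib, ← Finset.sum_mul, ← hΛ]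
      -- fixed point below 1
      obtain ⟨t, ht_mem, ht0⟩ : ∃ t ∈ Set.Icc (0:ℝ) (1/Λ),
          Real.exp (-(Λ * (1 - t))) - t = 0 := by
        have hcont : ContinuousOn (fun t : ℝ => Real.exp (-(Λ * (1 - t))) - t)
            (Set.Icc 0 (1/Λ)) := by fun_prop
        have h0 : (0:ℝ) < Real.exp (-(Λ * (1 - 0))) - 0 := by simpa using Real.exp_pos _
        have h1 : Real.exp (-(Λ * (1 - 1/Λ))) - 1/Λ < 0 := by
          have he : Λ - 1 + 1 < Real.exp (Λ - 1) := Real.add_one_lt_exp (by linarith)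
          have hlt : Λ < Real.exp (Λ - 1) := by linarith
          have hinv : (Real.exp (Λ - 1))⁻¹ < Λ⁻¹ := by
            exact inv_strictAnti₀ hΛ0 hlt
          have harg : -(Λ * (1 - 1/Λ)) = -(Λ - 1) := by field_simp
          rw [harg, Real.exp_neg]
          rw [one_div]
          linarith
        have hsub := intermediate_value_Icc' (by positivity : (0:ℝ) ≤ 1/Λ) hcont
        obtain ⟨t, htmem, ht⟩ := hsub ⟨le_of_lt h1, le_of_lt h0⟩
        exact ⟨t, htmem, ht⟩
      have ht' : Real.exp (-(Λ * (1 - t))) = t := by linarith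
      have ht_pos : 0 < t := ht' ▸ Real.exp_pos _
      have ht_lt1 : t < 1 := lt_of_le_of_lt ht_mem.2 (by
        rw [div_lt_one hΛ0]; exact hΛ1)
      have hbnd : ∀ n : ℕ, (qseq lam n ({i} : Finset (Fin k))).toReal ≤ t := by
        intro n
        induction n with
        | zero =>
          have : qseq lam 0 ({i} : Finset (Fin k)) = 0 := by
            simp [qseq]
          rw [this]
          simpa using le_of_lt ht_pos
        | succ n ih =>
          rw [hsingle n]
          calc Real.exp (-(Λ * (1 - (qseq lam n ({i} : Finset (Fin k))).toReal)))
              ≤ Real.exp (-(Λ * (1 - t))) := by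
                apply Real.exp_le_exp.2
                nlinarith
            _ = t := ht'
      have husingle : u {i} ≤ t :=
        le_of_tendsto (htendsto {i}) (Filter.Eventually.of_forall hbnd)
      have hpi : 0 < p ({i} : Finset (Fin k)) := by rw [hpu]; linarith
      have hmono : p ({i} : Finset (Fin k)) ≤ p I := by
        rw [hp {i}, hp I]
        refine ENNReal.toReal_mono (measure_ne_top μ' _) (measure_mono ?_)
        intro ω hω
        rcases hω with ⟨i', hi', hav⟩
        rcases Finset.mem_singleton.1 hi' with rfl
        exact ⟨i', hi, hav⟩
      linarith
    · rw [hpu]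
      linarith [hu_pos I]
  have hpnn : ∀ J, 0 ≤ p J := fun J => by rw [hp J]; exact ENNReal.toReal_nonneg
  have hrel : IsRelevantSolution lam p := by
    refine ⟨?_, fun I _ => hueq' I, hbound⟩
    rw [hpu ∅, hu_empty]
    ring
  refine ⟨hrel, ?_⟩
  intro x hx
  obtain ⟨hx0, hxeq, hxb⟩ := hx
  funext I
  suffices h : ∀ (n : ℕ) (I : Finset (Fin k)), I.card ≤ n → x I = p I from h I.card I le_rfl
  intro n
  induction n with
  | zero =>
    intro I hI
    have : I = ∅ := Finset.card_eq_zero.1 (Nat.le_zero.1 hI)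
    subst this
    rw [hx0, hpu ∅, hu_empty]
    ring
  | succ n ih =>
    intro I hI
    rcases eq_or_ne I ∅ with rfl | hne
    · rw [hx0, hpu ∅, hu_empty]; ring
    have hIne : I.Nonempty := Finset.nonempty_iff_ne_empty.2 hne
    have herase : ∀ j ∈ I, x (I.erase j) = p (I.erase j) := by
      intro j hj
      refine ih _ ?_
      rw [Finset.card_erase_of_mem hj]
      omega
    set C : ℝ := ∑ j ∈ I, lam j * p (I.erase j) with hC
    set D : ℝ := ∑ j ∈ Iᶜ, lam j with hD
    have hCx : ∑ j ∈ I, lam j * x (I.erase j) = C :=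
      Finset.sum_congr rfl fun j hj => by rw [herase j hj]
    have hxI : x I = 1 - Real.exp (-C - x I * D) := by
      have := hxeq I hIne
      rw [hCx] at this
      exact this
    have hpI : p I = 1 - Real.exp (-C - p I * D) := hueq' I
    have hC0 : 0 ≤ C :=
      Finset.sum_nonneg fun j _ => mul_nonneg (le_of_lt (hpos j)) (hpnn _)
    have hD0 : 0 ≤ D := Finset.sum_nonneg fun j _ => le_of_lt (hpos j)
    rcases hD0.eq_or_lt with hDeq | hDlt
    · rw [hxI, hpI, ← hDeq, mul_zero, mul_zero]
    · have hx_pos : 0 < x I := (hxb I hIne).1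
      have hp_pos : 0 < p I := (hbound I hIne).1
      rcases lt_trichotomy (x I) (p I) with hlt | heq | hgt
      · exact (root_unique hC0 hDlt hx_pos hlt hxI hpI).elim
      · exact heq
      · exact (root_unique hC0 hDlt hp_pos hgt hpI hxI).elim

end CAP
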